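/- arXiv:2208.09509 — 5 statements merged into one kernel-verified Lean document; each statement's English description precedes it below -/
import Mathlib

section
/- An extended matrix M ∈ matr∗(n,m,k) is functional in every pointed set if and only if it is functional in some pointed set having at least two elements. -/
/-- `M ∈ matr∗(n,m,k)` is modelled by its left part `L : Fin n → Fin m → Option (Fin k)`
and its right column `r : Fin n → Option (Fin k)`, where `none` is the constant `∗` and
`some v` is the variable `x_{v+1}`.  `M` is functional in the pointed set `(Y, pt)` if for
all row indices `i, i'` and pointed functions `f, f'` agreeing row-wise on the left entries,
the values on the right entries agree. -/
def IsFunctional {n m k : ℕ} (L : Fin n → Fin m → Option (Fin k))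
    (r : Fin n → Option (Fin k)) (Y : Type) (pt : Y) : Prop :=
  ∀ (i i' : Fin n) (f f' : Option (Fin k) → Y), f none = pt → f' none = pt →
    (∀ j : Fin m, f (L i j) = f' (L i' j)) → f (r i) = f' (r i')

/-- Auxiliary: if `M` is functional in a pointed set with two elements, then for pointed
functions `f, f'` into any pointed set `(Y, pt)` agreeing on left entries, and any value
`v ≠ pt`, if `f (r i) = v` then `f' (r i') = v`. -/
lemma aux_indicator {n m k : ℕ} (L : Fin n → Fin m → Option (Fin k))
    (r : Fin n → Option (Fin k)) {Z : Type} {ptZ : Z} {z : Z} (hz : z ≠ ptZ)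
    (hfun : IsFunctional L r Z ptZ) {Y : Type} {pt : Y}
    (i i' : Fin n) (f f' : Option (Fin k) → Y) (hf : f none = pt) (hf' : f' none = pt)
    (hagree : ∀ j : Fin m, f (L i j) = f' (L i' j)) {v : Y} (hv : v ≠ pt)
    (hri : f (r i) = v) : f' (r i') = v := by
  classical
  set g : Option (Fin k) → Z := fun a => if f a = v then z else ptZ with hg
  set g' : Option (Fin k) → Z := fun a => if f' a = v then z else ptZ with hg'
  have h := hfun i i' g g'
    (by simp [hg, hf, (Ne.symm hv)])
    (by simp [hg', hf', (Ne.symm hv)])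
    (fun j => by simp [hg, hg', hagree j])
  simp only [hg, hg', hri, if_true, eq_self_iff_true] at h
  by_contra hne
  rw [if_neg hne] at h
  exact hz h

/-- `M` is functional in every pointed set iff it is functional in some
pointed set having at least two elements. -/
theorem stmt_1 {n m k : ℕ} (L : Fin n → Fin m → Option (Fin k))
    (r : Fin n → Option (Fin k)) :
    (∀ (Y : Type) (pt : Y), IsFunctional L r Y pt) ↔
      (∃ (Y : Type) (pt : Y), (∃ y : Y, y ≠ pt) ∧ IsFunctional L r Y pt) := by
  constructor
  · intro h
    exact ⟨Bool, false, ⟨true, by simp⟩, h Bool false⟩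
  · rintro ⟨Z, ptZ, ⟨z, hz⟩, hfun⟩ Y pt i i' f f' hf hf' hagree
    by_cases h1 : f (r i) = pt
    · by_cases h2 : f' (r i') = pt
      · rw [h1, h2]
      · have := aux_indicator L r hz hfun i' i f' f hf' hf
          (fun j => (hagree j).symm) h2 rfl
        rw [h1] at this; exact absurd this.symm h2
    · rw [aux_indicator L r hz hfun i i' f f' hf hf' hagree h1 rfl]
end

section
/- If an extended matrix M ∈ matr∗(n,m,k) is functional in a two-element pointed set, then every row of M whose right entry is a variable x (i.e., not ∗) contains x among its left entries. -/
/-- if `M` is functional in a two-element pointed set, then every row of `M`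
whose right entry is a variable `x` contains `x` among its left entries. -/
theorem stmt_2 {n m k : ℕ} (L : Fin n → Fin m → Option (Fin k))
    (r : Fin n → Option (Fin k))
    (Y : Type) (pt y : Y) (hy : y ≠ pt) (htwo : ∀ z : Y, z = pt ∨ z = y)
    (hfun : IsFunctional L r Y pt) :
    ∀ (i : Fin n) (x : Fin k), r i = some x → ∃ j : Fin m, L i j = some x := by
  intro i x hx
  by_contra h
  push_neg at h
  have := hfun i i (fun z => if z = some x then y else pt) (fun _ => pt) (by simp) rfl
    (by
      intro j
      show (if L i j = some x then y else pt) = pt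
      rw [if_neg (fun he => h j he)])
  rw [hx] at this
  simp at this
  exact hy this
end

section
/- If M ∈ matr∗(n,m,k) and for some row i the left entries of the i-th row of M consist of m pairwise distinct variables (no ∗ and no repetitions among x₁,...,x_k), and the right entry of that row is a variable not among the left entries of that row, then M is not functional in any pointed set with at least two elements. -/
/-- if some row `i` of `M` has left entries consisting of `m` pairwise
distinct variables (no `∗`, no repetitions) and its right entry is a variable not among
its left entries, then `M` is not functional in any pointed set with at least two
elements. -/
theorem stmt_3 {n m k : ℕ} (L : Fin n → Fin m → Option (Fin k))
    (r : Fin n → Option (Fin k)) (i : Fin n) (v : Fin m → Fin k)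
    (hleft : ∀ j : Fin m, L i j = some (v j)) (hinj : Function.Injective v)
    (x : Fin k) (hright : r i = some x) (hnot : ∀ j : Fin m, v j ≠ x) :
    ∀ (Y : Type) (pt : Y), (∃ y : Y, y ≠ pt) → ¬ IsFunctional L r Y pt := by
  rintro Y pt ⟨y, hy⟩ hfun
  set f : Option (Fin k) → Y := fun o => if o = some x then y else pt with hf
  have h := hfun i i f (fun _ => pt) rfl rfl (fun j => by
    simp [hf, hleft j, hnot j])
  rw [hright] at h
  simp [hf] at h
  exact hy h
end

section
/- Let M ∈ matr∗(n,m,k) and let (Y,∗) be a pointed set. If whenever row indices i, i' and a column index j satisfy the relation j (R_{M_i} ∨ R_{M_{i'}} ∨ R*_{M_{i,i'}}) j' then any pair of pointed functions f_i, f_{i'} : {∗,x₁,...,x_k} → Y agreeing on left columns (f_i(M_{i,ℓ}) = f_{i'}(M_{i',ℓ}) for all ℓ ≤ m) satisfies f_i(M_{i,j}) = f_i(M_{i,j'}) = f_{i'}(M_{i',j}) = f_{i'}(M_{i',j'}). -/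
/-- Let `M` have left part `L` and entries in `Option (Fin k)` (`none = ∗`).
For rows `i, i'`, the join `R_{M_i} ∨ R_{M_{i'}} ∨ R*_{M_{i,i'}}` of the three equivalence
relations on the left-column indices is the equivalence relation generated by their union.
If `j` and `j'` are related by this join, then any pair of pointed functions
`f, f' : {∗,x₁,…,x_k} → Y` agreeing on all left columns of rows `i` and `i'` satisfies
`f(M_{i,j}) = f(M_{i,j'}) = f'(M_{i',j}) = f'(M_{i',j'})`. -/
theorem stmt_4 {n m k : ℕ} (L : Fin n → Fin m → Option (Fin k))
    (i i' : Fin n) (j j' : Fin m)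
    (hjoin : Relation.EqvGen
      (fun a b : Fin m =>
        (L i a = L i b) ∨ (L i' a = L i' b) ∨
          (a = b ∨ ((L i a = none ∨ L i' a = none) ∧ (L i b = none ∨ L i' b = none))))
      j j')
    (Y : Type) (pt : Y) (f f' : Option (Fin k) → Y)
    (hf : f none = pt) (hf' : f' none = pt)
    (hagree : ∀ ℓ : Fin m, f (L i ℓ) = f' (L i' ℓ)) :
    f (L i j) = f (L i j') ∧ f (L i j') = f' (L i' j) ∧ f' (L i' j) = f' (L i' j') := by
  have key : f (L i j) = f (L i j') := by
    induction hjoin with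
    | rel a b h =>
      rcases h with h | h | h | ⟨ha, hb⟩
      · rw [h]
      · rw [hagree a, h, ← hagree b]
      · rw [h]
      · have pa : f (L i a) = pt := by
          rcases ha with h1 | h1
          · rw [h1, hf]
          · rw [hagree a, h1, hf']
        have pb : f (L i b) = pt := by
          rcases hb with h1 | h1
          · rw [h1, hf]
          · rw [hagree b, h1, hf']
        rw [pa, pb]
    | refl a => rfl
    | symm a b _ ih => exact ih.symm
    | trans a b c _ _ ih1 ih2 => exact ih1.trans ih2
  refine ⟨key, ?_, ?_⟩
  · rw [← key, hagree j]
  · rw [← hagree j, key, hagree j']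
end

section
/- The category of pointed sets Set∗ has M-closed relations for an extended matrix M ∈ matr∗(n,m,k) if and only if either all entries of the right column of M are ∗, or the right column of M equals one of its left columns. -/
/-- An `n`-ary pointed relation `R` on a pointed set `(A, pt)` is `M`-closed (for the
matrix with left part `L` and right column `r`, entries in `Option (Fin k)` where
`none = ∗`) when for every pointed function `f`, if all interpreted left columns lie in
`R` then so does the interpreted right column. -/
def MClosed {n m k : ℕ} (A : Type) (pt : A) (L : Fin n → Fin m → Option (Fin k))
    (r : Fin n → Option (Fin k)) (R : Set (Fin n → A)) : Prop :=
  ∀ f : Option (Fin k) → A, f none = pt →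
    (∀ j : Fin m, (fun i => f (L i j)) ∈ R) → (fun i => f (r i)) ∈ R

/-- `Set∗` has `M`-closed relations (every pointed relation on every pointed
set is `M`-closed) iff all entries of the right column of `M` are `∗`, or the right
column of `M` equals one of its left columns. -/
theorem stmt_5 {n m k : ℕ} (L : Fin n → Fin m → Option (Fin k))
    (r : Fin n → Option (Fin k)) :
    (∀ (A : Type) (pt : A) (R : Set (Fin n → A)),
        (fun _ => pt) ∈ R → MClosed A pt L r R) ↔
      ((∀ i, r i = none) ∨ (∃ j : Fin m, ∀ i, L i j = r i)) := by
  constructor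
  · intro h
    have key := h (Option (Fin k)) none
      (insert (fun _ => none) (Set.range (fun j i => L i j)))
      (Or.inl rfl) id rfl (fun j => Or.inr ⟨j, rfl⟩)
    rcases key with hk | ⟨j, hj⟩
    · exact Or.inl fun i => congrFun hk i
    · exact Or.inr ⟨j, fun i => congrFun hj i⟩
  · rintro (hr | ⟨j, hj⟩) A pt R hR f hf hL
    · have : (fun i => f (r i)) = (fun _ => pt) := by
        funext i; rw [hr i, hf]
      rw [this]; exact hR
    · have : (fun i => f (r i)) = (fun i => f (L i j)) := by
        funext i; rw [hj i]
      rw [this]; exact hL j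
end
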